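/- Define g, h : ℝ^n × ℝ^n × ℝ → ℝ by g(x,y,z) = ‖y‖² + [((z+1)² + ‖y−x‖²)² + ((z−1)² + ‖y+x‖²)²]/16 + (z² + ‖x‖²)²/2 and h(x,y,z) = [((z+1)² + ‖y+x‖²)² + ((z−1)² + ‖y−x‖²)²]/16 + (z⁴ + ‖x‖⁴)/2. Then (i) for all x, y ∈ ℝ^n and z ∈ ℝ, g(x,y,z) − h(x,y,z) = ‖y − z·x‖², and (ii) both g and h are convex functions on ℝ^n × ℝ^n × ℝ. -/

import Mathlib

open Matrix

/-- The first DC component of the DC-SOS decomposition of `‖y − z·x‖²`,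
written with `‖u‖² = u ⬝ᵥ u`, on points `p = (x, y, z)`. -/
noncomputable def gDC {n : ℕ} (p : (Fin n → ℝ) × (Fin n → ℝ) × ℝ) : ℝ :=
  p.2.1 ⬝ᵥ p.2.1 +
    (((p.2.2 + 1) ^ 2 + (p.2.1 - p.1) ⬝ᵥ (p.2.1 - p.1)) ^ 2 +
      ((p.2.2 - 1) ^ 2 + (p.2.1 + p.1) ⬝ᵥ (p.2.1 + p.1)) ^ 2) / 16 +
    (p.2.2 ^ 2 + p.1 ⬝ᵥ p.1) ^ 2 / 2

/-- The second DC component of the DC-SOS decomposition of `‖y − z·x‖²`. -/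
noncomputable def hDC {n : ℕ} (p : (Fin n → ℝ) × (Fin n → ℝ) × ℝ) : ℝ :=
  (((p.2.2 + 1) ^ 2 + (p.2.1 + p.1) ⬝ᵥ (p.2.1 + p.1)) ^ 2 +
      ((p.2.2 - 1) ^ 2 + (p.2.1 - p.1) ⬝ᵥ (p.2.1 - p.1)) ^ 2) / 16 +
    (p.2.2 ^ 4 + (p.1 ⬝ᵥ p.1) ^ 2) / 2

section Aux

variable {E : Type*} [AddCommGroup E] [Module ℝ E]

/-- The square of an affine real-valued function is convex. -/
private lemma convexOn_sq_lin (L : E →ₗ[ℝ] ℝ) (c : ℝ) :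
    ConvexOn ℝ Set.univ (fun x => (L x + c) ^ 2) := by
  refine ⟨convex_univ, fun x _ y _ a b ha hb hab => ?_⟩
  simp only [smul_eq_mul, map_add, _root_.map_smul, smul_eq_mul]
  have h2 : a * L x + b * L y + c = a * (L x + c) + b * (L y + c) := by
    linear_combination (-c) * hab
  rw [h2]
  nlinarith [mul_nonneg (mul_nonneg ha hb) (sq_nonneg (L x + c - (L y + c)))]

private lemma convexOn_sq_lin' (L : E →ₗ[ℝ] ℝ) :
    ConvexOn ℝ Set.univ (fun x => (L x) ^ 2) := by
  refine ⟨convex_univ, fun x _ y _ a b ha hb hab => ?_⟩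
  simp only [smul_eq_mul, map_add, _root_.map_smul, smul_eq_mul]
  nlinarith [sq_nonneg (L x - L y), mul_nonneg ha hb,
    mul_nonneg (mul_nonneg ha hb) (sq_nonneg (L x - L y))]

/-- The square of a nonnegative convex function is convex. -/
private lemma ConvexOn.sq' {f : E → ℝ} (hf : ConvexOn ℝ Set.univ f)
    (h0 : ∀ x, 0 ≤ f x) : ConvexOn ℝ Set.univ (fun x => (f x) ^ 2) := by
  refine ⟨convex_univ, fun x _ y _ a b ha hb hab => ?_⟩
  have h1 := hf.2 (Set.mem_univ x) (Set.mem_univ y) ha hb hab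
  simp only [smul_eq_mul] at h1 ⊢
  nlinarith [h0 x, h0 y, h0 (a • x + b • y), sq_nonneg (f x - f y),
    mul_nonneg ha hb, mul_nonneg (mul_nonneg ha hb) (sq_nonneg (f x - f y)),
    mul_nonneg ha (h0 x), mul_nonneg hb (h0 y)]

private lemma convexOn_finset_sum {ι : Type*} (t : Finset ι) (f : ι → E → ℝ)
    (h : ∀ i ∈ t, ConvexOn ℝ Set.univ (f i)) :
    ConvexOn ℝ Set.univ (fun x => ∑ i ∈ t, f i x) := by
  classical
  induction t using Finset.induction with
  | empty => simpa using convexOn_const (0 : ℝ) convex_univ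
  | @insert a s hx ih =>
    simp only [Finset.sum_insert hx]
    exact (h a (Finset.mem_insert_self a s)).add
      (ih fun i hi => h i (Finset.mem_insert_of_mem hi))

end Aux

section Coords

variable {n : ℕ}

private abbrev EE (n : ℕ) := (Fin n → ℝ) × (Fin n → ℝ) × ℝ

private noncomputable def Xc (i : Fin n) : EE n →ₗ[ℝ] ℝ :=
  (LinearMap.proj i).comp (LinearMap.fst ℝ (Fin n → ℝ) ((Fin n → ℝ) × ℝ))

private noncomputable def Yc (i : Fin n) : EE n →ₗ[ℝ] ℝ :=
  (LinearMap.proj i).comp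
    ((LinearMap.fst ℝ (Fin n → ℝ) ℝ).comp (LinearMap.snd ℝ (Fin n → ℝ) ((Fin n → ℝ) × ℝ)))

private noncomputable def Zc : EE n →ₗ[ℝ] ℝ :=
  (LinearMap.snd ℝ (Fin n → ℝ) ℝ).comp (LinearMap.snd ℝ (Fin n → ℝ) ((Fin n → ℝ) × ℝ))

private lemma Xc_apply (i : Fin n) (p : EE n) : Xc i p = p.1 i := rfl
private lemma Yc_apply (i : Fin n) (p : EE n) : Yc i p = p.2.1 i := rfl
private lemma Zc_apply (p : EE n) : Zc p = p.2.2 := rfl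

private lemma conv_dot (v : EE n → (Fin n → ℝ)) (L : Fin n → (EE n →ₗ[ℝ] ℝ))
    (hL : ∀ i p, L i p = v p i) :
    ConvexOn ℝ Set.univ (fun p => v p ⬝ᵥ v p) := by
  have hcongr : (fun p => v p ⬝ᵥ v p) = fun p => ∑ i, (L i p) ^ 2 := by
    funext p
    simp [dotProduct, hL, sq]
  rw [hcongr]
  exact convexOn_finset_sum _ _ fun i _ => convexOn_sq_lin' (L i)

private lemma dot_self_nonneg (u : Fin n → ℝ) : 0 ≤ u ⬝ᵥ u := by
  exact Finset.sum_nonneg fun i _ => mul_self_nonneg _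

end Coords

/-- DC-SOS decomposition of `‖y − z·x‖²`:
the difference `g − h` equals `‖y − z·x‖²` and both `g` and `h` are convex. -/
theorem stmt17 {n : ℕ} :
    (∀ (x y : Fin n → ℝ) (z : ℝ),
      gDC (x, y, z) - hDC (x, y, z) = (y - z • x) ⬝ᵥ (y - z • x)) ∧
    ConvexOn ℝ (Set.univ : Set ((Fin n → ℝ) × (Fin n → ℝ) × ℝ)) gDC ∧
    ConvexOn ℝ (Set.univ : Set ((Fin n → ℝ) × (Fin n → ℝ) × ℝ)) hDC := by
  -- convexity of the basic dot-product pieces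
  have hYY : ConvexOn ℝ Set.univ (fun p : EE n => p.2.1 ⬝ᵥ p.2.1) :=
    conv_dot _ (fun i => Yc i) (fun i p => rfl)
  have hXX : ConvexOn ℝ Set.univ (fun p : EE n => p.1 ⬝ᵥ p.1) :=
    conv_dot _ (fun i => Xc i) (fun i p => rfl)
  have hSub : ConvexOn ℝ Set.univ (fun p : EE n => (p.2.1 - p.1) ⬝ᵥ (p.2.1 - p.1)) :=
    conv_dot _ (fun i => Yc i - Xc i) (fun i p => rfl)
  have hAdd : ConvexOn ℝ Set.univ (fun p : EE n => (p.2.1 + p.1) ⬝ᵥ (p.2.1 + p.1)) :=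
    conv_dot _ (fun i => Yc i + Xc i) (fun i p => rfl)
  -- the four big inner convex nonneg functions
  have hZp1 : ConvexOn ℝ Set.univ (fun p : EE n => (p.2.2 + 1) ^ 2) :=
    convexOn_sq_lin Zc 1
  have hZm1 : ConvexOn ℝ Set.univ (fun p : EE n => (p.2.2 - 1) ^ 2) := by
    have := convexOn_sq_lin (Zc (n := n)) (-1)
    simpa [sub_eq_add_neg, Zc_apply] using this
  have hZ2 : ConvexOn ℝ Set.univ (fun p : EE n => p.2.2 ^ 2) :=
    convexOn_sq_lin' Zc
  have hA : ConvexOn ℝ Set.univ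
      (fun p : EE n => ((p.2.2 + 1) ^ 2 + (p.2.1 - p.1) ⬝ᵥ (p.2.1 - p.1)) ^ 2) :=
    (hZp1.add hSub).sq' fun p => add_nonneg (sq_nonneg _) (dot_self_nonneg _)
  have hB : ConvexOn ℝ Set.univ
      (fun p : EE n => ((p.2.2 - 1) ^ 2 + (p.2.1 + p.1) ⬝ᵥ (p.2.1 + p.1)) ^ 2) :=
    (hZm1.add hAdd).sq' fun p => add_nonneg (sq_nonneg _) (dot_self_nonneg _)
  have hC : ConvexOn ℝ Set.univ
      (fun p : EE n => ((p.2.2 + 1) ^ 2 + (p.2.1 + p.1) ⬝ᵥ (p.2.1 + p.1)) ^ 2) :=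
    (hZp1.add hAdd).sq' fun p => add_nonneg (sq_nonneg _) (dot_self_nonneg _)
  have hD : ConvexOn ℝ Set.univ
      (fun p : EE n => ((p.2.2 - 1) ^ 2 + (p.2.1 - p.1) ⬝ᵥ (p.2.1 - p.1)) ^ 2) :=
    (hZm1.add hSub).sq' fun p => add_nonneg (sq_nonneg _) (dot_self_nonneg _)
  have hEterm : ConvexOn ℝ Set.univ
      (fun p : EE n => (p.2.2 ^ 2 + p.1 ⬝ᵥ p.1) ^ 2) :=
    (hZ2.add hXX).sq' fun p => add_nonneg (sq_nonneg _) (dot_self_nonneg _)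
  have hZ4 : ConvexOn ℝ Set.univ (fun p : EE n => (p.2.2 ^ 2) ^ 2) :=
    hZ2.sq' fun p => by positivity
  have hXX2 : ConvexOn ℝ Set.univ (fun p : EE n => (p.1 ⬝ᵥ p.1) ^ 2) :=
    hXX.sq' fun p => dot_self_nonneg _
  refine ⟨?_, ?_, ?_⟩
  · -- the algebraic identity
    intro x y z
    simp only [gDC, hDC, dotProduct_sub, dotProduct_add, sub_dotProduct, add_dotProduct,
      dotProduct_smul, smul_dotProduct, smul_eq_mul]
    rw [dotProduct_comm x y]
    ring
  · -- convexity of gDC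
    have heq : gDC (n := n) = fun p =>
        (fun q : EE n => q.2.1 ⬝ᵥ q.2.1) p +
        ((1 / 16 : ℝ) • (fun q : EE n =>
          ((q.2.2 + 1) ^ 2 + (q.2.1 - q.1) ⬝ᵥ (q.2.1 - q.1)) ^ 2 +
          ((q.2.2 - 1) ^ 2 + (q.2.1 + q.1) ⬝ᵥ (q.2.1 + q.1)) ^ 2) p +
        (1 / 2 : ℝ) • (fun q : EE n => (q.2.2 ^ 2 + q.1 ⬝ᵥ q.1) ^ 2) p) := by
      funext p
      simp only [gDC, smul_eq_mul]
      ring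
    rw [heq]
    exact hYY.add ((((hA.add hB).smul (by norm_num : (0:ℝ) ≤ 1 / 16))).add
      (hEterm.smul (by norm_num : (0:ℝ) ≤ 1 / 2)))
  · -- convexity of hDC
    have heq : hDC (n := n) = fun p =>
        (1 / 16 : ℝ) • (fun q : EE n =>
          ((q.2.2 + 1) ^ 2 + (q.2.1 + q.1) ⬝ᵥ (q.2.1 + q.1)) ^ 2 +
          ((q.2.2 - 1) ^ 2 + (q.2.1 - q.1) ⬝ᵥ (q.2.1 - q.1)) ^ 2) p +
        (1 / 2 : ℝ) • (fun q : EE n => (q.2.2 ^ 2) ^ 2 + (q.1 ⬝ᵥ q.1) ^ 2) p := by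
      funext p
      simp only [hDC, smul_eq_mul]
      ring
    rw [heq]
    exact ((hC.add hD).smul (by norm_num : (0:ℝ) ≤ 1 / 16)).add
      ((hZ4.add hXX2).smul (by norm_num : (0:ℝ) ≤ 1 / 2))
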